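/- Let f : [0,1] → ℝ be C² with f(0)=0, f(1)=1, f'(s)>0 on (0,1), f'(0)=f'(1)=0, a unique inflection sI with f''>0 on (0,sI) and f''<0 on (sI,1). Let h > 0 and 0 < v ≤ (1+h)^{-1}. Then the line l(s) = v(s+h) intersects the graph of f at exactly one point s^c ∈ (0,1), and at this point f'(s^c) > v. -/

import Mathlib

open Set

/-- The line l(s) = v(s+h) intersects the S-shaped flux f exactly once in (0,1),
and at this point f' > v. -/
theorem stmt1 (f : ℝ → ℝ) (sI h v : ℝ)
    (hf : ContDiff ℝ 2 f) (hf0 : f 0 = 0) (hf1 : f 1 = 1)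
    (hf' : ∀ s ∈ Ioo (0:ℝ) 1, 0 < deriv f s)
    (hf'0 : deriv f 0 = 0) (hf'1 : deriv f 1 = 0)
    (hsI : sI ∈ Ioo (0:ℝ) 1)
    (hconv : ∀ s ∈ Ioo (0:ℝ) sI, 0 < deriv (deriv f) s)
    (hconc : ∀ s ∈ Ioo sI 1, deriv (deriv f) s < 0)
    (hh : 0 < h) (hv : 0 < v) (hvle : v ≤ (1 + h)⁻¹) :
    (∃! s, s ∈ Ioo (0:ℝ) 1 ∧ f s = v * (s + h)) ∧
    (∀ s ∈ Ioo (0:ℝ) 1, f s = v * (s + h) → v < deriv f s) := by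
  obtain ⟨hsI0, hsI1⟩ := hsI
  have hfd : Differentiable ℝ f := hf.differentiable two_ne_zero
  have hf'c : Continuous (deriv f) := hf.continuous_deriv one_le_two
  -- f' strictly increasing on [0,sI], strictly decreasing on [sI,1]
  have hmono : StrictMonoOn (deriv f) (Icc 0 sI) := by
    apply strictMonoOn_of_deriv_pos (convex_Icc _ _) hf'c.continuousOn
    intro x hx; rw [interior_Icc] at hx; exact hconv x hx
  have hanti : StrictAntiOn (deriv f) (Icc sI 1) := by
    apply strictAntiOn_of_deriv_neg (convex_Icc _ _) hf'c.continuousOn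
    intro x hx; rw [interior_Icc] at hx; exact hconc x hx
  -- v < 1 ≤ f'(sI)
  have hv1 : v < 1 := lt_of_le_of_lt hvle (by
    rw [inv_lt_one_iff₀]; right; linarith)
  obtain ⟨c, hc, hc1⟩ := exists_hasDerivAt_eq_slope f (deriv f) one_pos
      hfd.continuous.continuousOn (fun x _ => (hfd x).hasDerivAt)
  have hc1' : deriv f c = 1 := by rw [hc1, hf0, hf1]; norm_num
  have hsIv : v < deriv f sI := by
    have h1le : (1:ℝ) ≤ deriv f sI := by
      rcases le_total c sI with hcs | hcs
      · have := hmono.monotoneOn ⟨hc.1.le, hcs⟩ ⟨hsI0.le, le_rfl⟩ hcs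
        linarith [hc1']
      · have := hanti.antitoneOn ⟨le_rfl, hsI1.le⟩ ⟨hcs, hc.2.le⟩ hcs
        linarith [hc1']
    linarith
  -- α and β with f'(α) = f'(β) = v
  obtain ⟨α, hα, hαv⟩ : ∃ α ∈ Ioo (0:ℝ) sI, deriv f α = v := by
    have := intermediate_value_Ioo hsI0.le hf'c.continuousOn
      (by rw [hf'0]; exact ⟨hv, hsIv⟩ : v ∈ Ioo (deriv f 0) (deriv f sI))
    obtain ⟨α, hα1, hα2⟩ := this
    exact ⟨α, hα1, hα2⟩
  obtain ⟨β, hβ, hβv⟩ : ∃ β ∈ Ioo sI (1:ℝ), deriv f β = v := by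
    have := intermediate_value_Ioo' hsI1.le hf'c.continuousOn
      (by rw [hf'1]; exact ⟨hv, hsIv⟩ : v ∈ Ioo (deriv f 1) (deriv f sI))
    obtain ⟨β, hβ1, hβ2⟩ := this
    exact ⟨β, hβ1, hβ2⟩
  have hαβ : α < β := hα.2.trans hβ.1
  -- sign of f' - v
  have hgt : ∀ s ∈ Ioo α β, v < deriv f s := by
    intro s hs
    rcases le_total s sI with hssI | hssI
    · have := hmono ⟨hα.1.le, hα.2.le⟩ ⟨(hα.1.trans hs.1).le, hssI⟩ hs.1
      linarith [hαv]
    · have := hanti ⟨hssI, (hs.2.trans hβ.2).le⟩ ⟨hβ.1.le, hβ.2.le⟩ hs.2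
      linarith [hβv]
  -- the function g
  set g : ℝ → ℝ := fun s => f s - v * (s + h) with hgdef
  have hgder : ∀ s, HasDerivAt g (deriv f s - v) s := by
    intro s
    have h2 : HasDerivAt (fun s : ℝ => v * (s + h)) (v * 1) s :=
      ((hasDerivAt_id s).add_const h).const_mul v
    have h3 : HasDerivAt (fun s => f s - v * (s + h)) (deriv f s - v * 1) s := (hfd s).hasDerivAt.sub h2
    rw [mul_one] at h3; exact h3
  have hgderiv : ∀ s, deriv g s = deriv f s - v := fun s => (hgder s).deriv
  have hgc : Continuous g := hfd.continuous.sub (by continuity)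
  have hganti1 : StrictAntiOn g (Icc 0 α) := by
    apply strictAntiOn_of_deriv_neg (convex_Icc _ _) hgc.continuousOn
    intro x hx; rw [interior_Icc] at hx
    rw [hgderiv]
    have := hmono ⟨hx.1.le, (hx.2.trans hα.2).le⟩ ⟨hα.1.le, hα.2.le⟩ hx.2
    linarith [hαv]
  have hganti2 : StrictAntiOn g (Icc β 1) := by
    apply strictAntiOn_of_deriv_neg (convex_Icc _ _) hgc.continuousOn
    intro x hx; rw [interior_Icc] at hx
    rw [hgderiv]
    have := hanti ⟨hβ.1.le, hβ.2.le⟩ ⟨(hβ.1.trans hx.1).le, hx.2.le⟩ hx.1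
    linarith [hβv]
  have hgmono : StrictMonoOn g (Icc α β) := by
    apply strictMonoOn_of_deriv_pos (convex_Icc _ _) hgc.continuousOn
    intro x hx; rw [interior_Icc] at hx
    rw [hgderiv]
    linarith [hgt x hx]
  -- endpoint values
  have hg0 : g 0 < 0 := by
    simp only [hgdef, hf0]
    nlinarith
  have hg1 : 0 ≤ g 1 := by
    have hinv : (1 + h)⁻¹ * (1 + h) = 1 := by
      field_simp
    have : v * (1 + h) ≤ 1 := by nlinarith
    simp only [hgdef, hf1]
    linarith
  have hgα : g α < 0 := lt_trans (hganti1 ⟨le_rfl, hα.1.le⟩ ⟨hα.1.le, le_rfl⟩ hα.1) hg0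
  have hgβ : 0 < g β := lt_of_le_of_lt hg1 (hganti2 ⟨le_rfl, hβ.2.le⟩ ⟨hβ.2.le, le_rfl⟩ hβ.2)
  -- localization of zeros
  have hloc : ∀ s ∈ Ioo (0:ℝ) 1, g s = 0 → s ∈ Ioo α β := by
    intro s hs hgs
    constructor
    · by_contra hle
      push_neg at hle
      have : g s < 0 := by
        rcases eq_or_lt_of_le hle with heq | hlt
        · rw [heq]; exact hgα
        · exact lt_trans (hganti1 ⟨le_rfl, hα.1.le⟩ ⟨hs.1.le, hle⟩ hs.1) hg0
      linarith
    · by_contra hle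
      push_neg at hle
      have : 0 < g s := by
        rcases eq_or_lt_of_le hle with heq | hlt
        · rw [← heq]; exact hgβ
        · exact lt_of_le_of_lt hg1 (hganti2 ⟨hle, hs.2.le⟩ ⟨hβ.2.le, le_rfl⟩ hs.2)
      linarith
  -- existence
  obtain ⟨sc, hsc, hscz⟩ : ∃ sc ∈ Ioo α β, g sc = 0 := by
    have := intermediate_value_Ioo hαβ.le hgc.continuousOn
      (⟨hgα, hgβ⟩ : (0:ℝ) ∈ Ioo (g α) (g β))
    obtain ⟨sc, h1, h2⟩ := this
    exact ⟨sc, h1, h2⟩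
  have hsc01 : sc ∈ Ioo (0:ℝ) 1 := ⟨hα.1.trans hsc.1, hsc.2.trans hβ.2⟩
  have hscf : f sc = v * (sc + h) := by
    have := hscz
    simp only [hgdef] at this
    linarith
  constructor
  · refine ⟨sc, ⟨hsc01, hscf⟩, ?_⟩
    intro s ⟨hs01, hsf⟩
    have hgs : g s = 0 := by simp only [hgdef]; linarith
    have hsαβ := hloc s hs01 hgs
    exact hgmono.injOn ⟨hsαβ.1.le, hsαβ.2.le⟩ ⟨hsc.1.le, hsc.2.le⟩ (by rw [hgs, hscz])
  · intro s hs01 hsf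
    have hgs : g s = 0 := by simp only [hgdef]; linarith
    exact hgt s (hloc s hs01 hgs)
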